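/- Assume that the orbit o(D/A) of D under Aut(U/A) has finite VC-dimension, and let ⟨a_i : i < ω⟩ be any A-indiscernible sequence of |z|-tuples. Then the sequence of truth values ⟨a_i ∈ D : i < ω⟩ converges, i.e., is eventually constant. -/

import Mathlib

namespace Paper

open FirstOrder Language Cardinal Set

universe u

variable (L : FirstOrder.Language.{u, u}) (U : Type u) [iS : L.Structure U]

/-- A language consisting of a single `n`-ary relation symbol. -/
def predLang (n : ℕ) : FirstOrder.Language.{u, u} where
  Functions := fun _ => PEmpty
  Relations := fun m => ULift (PLift (m = n))

/-- The language `L` together with one new `n`-ary relation symbol. -/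
def expLang (n : ℕ) : FirstOrder.Language.{u, u} := L.sum (predLang n)

/-- The expansion `⟨U, D⟩` of `U` by a predicate for `D ⊆ U^n`. -/
def expStr {n : ℕ} (D : Set (Fin n → U)) : (expLang L n).Structure U where
  funMap := fun {_} f x =>
    match f with
    | Sum.inl f => Structure.funMap f x
    | Sum.inr f => f.elim
  RelMap := fun {_} r x =>
    match r with
    | Sum.inl r => Structure.RelMap r x
    | Sum.inr h => (x ∘ Fin.cast h.down.down.symm) ∈ D

/-- Add the elements of `A : Set U` as constants to an arbitrary structure on `U`. -/
def addConsts {L' : FirstOrder.Language.{u, u}} (S : L'.Structure U) (A : Set U) :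
    (L'[[↥A]]).Structure U :=
  letI := S
  letI : (constantsOn ↥A).Structure U := constantsOn.structure Subtype.val
  Language.sumStructure _ _ _

/-- Add all elements of `U` as constants to an arbitrary structure on `U`. -/
def addAllConsts {L' : FirstOrder.Language.{u, u}} (S : L'.Structure U) :
    (L'[[U]]).Structure U :=
  letI := S
  letI : (constantsOn U).Structure U := constantsOn.structure id
  Language.sumStructure _ _ _

/-- Realization of a formula with respect to an explicitly given structure. -/
def FRealize {L' : FirstOrder.Language.{u, u}} (S : L'.Structure U) {α : Type*}
    (φ : L'.Formula α) (v : α → U) : Prop :=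
  @Formula.Realize L' U S α φ v

/-- Realization of a sentence with respect to an explicitly given structure. -/
def SentRealize {L' : FirstOrder.Language.{u, u}} (S : L'.Structure U) (φ : L'.Sentence) : Prop :=
  @Sentence.Realize L' U S φ

/-- A structure on `U` is saturated if every type over a parameter set of cardinality `< #U`
which is finitely realized is realized. -/
def IsSatStr {L' : FirstOrder.Language.{u, u}} (S : L'.Structure U) : Prop :=
  ∀ A : Set U, #A < #U → ∀ (m : ℕ) (p : Set ((L'[[↥A]]).Formula (Fin m))),
    (∀ s : Finset ((L'[[↥A]]).Formula (Fin m)), ↑s ⊆ p →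
      ∃ b : Fin m → U, ∀ φ ∈ s, FRealize U (addConsts U S A) φ b) →
    ∃ b : Fin m → U, ∀ φ ∈ p, FRealize U (addConsts U S A) φ b

/-- `D ⊆ U^n` is saturated if the expansion `⟨U, D⟩` is a saturated structure. -/
def SatSet {n : ℕ} (D : Set (Fin n → U)) : Prop :=
  IsSatStr U (expStr L U D)

/-- `⟨U,C⟩ ≡_A ⟨U,D⟩` : the two expansions satisfy the same sentences with parameters in `A`. -/
def EqvOver {n : ℕ} (A : Set U) (C D : Set (Fin n → U)) : Prop :=
  ∀ φ : ((expLang L n)[[↥A]]).Sentence,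
    SentRealize U (addConsts U (expStr L U C) A) φ ↔
      SentRealize U (addConsts U (expStr L U D) A) φ

/-- `e(D/A)`, the class of all `C` with `⟨U,C⟩ ≡_A ⟨U,D⟩`. -/
def eSet {n : ℕ} (A : Set U) (D : Set (Fin n → U)) : Set (Set (Fin n → U)) :=
  {C | EqvOver L U A C D}

/-- The group `Aut(U/A)` of automorphisms of `U` fixing `A` pointwise (as a set). -/
def AutFix (A : Set U) : Set (U ≃[L] U) :=
  {f | ∀ a ∈ A, f a = a}

/-- The image of a set of tuples under an automorphism. -/
def imgSet {n : ℕ} (f : U ≃[L] U) (D : Set (Fin n → U)) : Set (Fin n → U) :=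
  (fun b => ⇑f ∘ b) '' D

/-- The orbit `o(D/A)` of `D` under `Aut(U/A)`. -/
def oSet {n : ℕ} (A : Set U) (D : Set (Fin n → U)) : Set (Set (Fin n → U)) :=
  {C | ∃ f ∈ AutFix L U A, imgSet L U f D = C}

/-- The orbit `o(b/A)` of a tuple `b` under `Aut(U/A)`. -/
def oTuple {n : ℕ} (A : Set U) (b : Fin n → U) : Set (Fin n → U) :=
  {c | ∃ f ∈ AutFix L U A, ⇑f ∘ b = c}

/-- A family of sets shatters `B` if every subset of `B` is the trace of a member. -/
def Shatters {α : Type*} (u : Set (Set α)) (B : Set α) : Prop :=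
  ∀ H ⊆ B, ∃ D ∈ u, D ∩ B = H

/-- A family of sets has finite VC dimension if for some `N` it shatters no `N`-element set. -/
def FiniteVC {α : Type*} (u : Set (Set α)) : Prop :=
  ∃ N : ℕ, ∀ B : Finset α, B.card = N → ¬Shatters u ↑B

/-- `B^{|z|}`, the set of tuples with coordinates in `B`. -/
def tuplesIn {n : ℕ} (B : Set U) : Set (Fin n → U) :=
  {a | ∀ i, a i ∈ B}

/-- `φ(b, U)`, the set defined by `φ(x,z)` with `x ↦ b`. -/
def phiSet {m n : ℕ} (φ : L.Formula (Fin m ⊕ Fin n)) (b : Fin m → U) :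
    Set (Fin n → U) :=
  {a | φ.Realize (Sum.elim b a)}

/-- `D` is approximable by `φ(x,z)` : every finite trace of `D` is the trace of
some instance `φ(b,U)`. -/
def ApproxBy {n : ℕ} (D : Set (Fin n → U)) {m : ℕ} (φ : L.Formula (Fin m ⊕ Fin n)) : Prop :=
  ∀ B : Finset U, ∃ b : Fin m → U,
    phiSet L U φ b ∩ tuplesIn U ↑B = D ∩ tuplesIn U ↑B

/-- `D` is approximable from below by `φ(x,z)`. -/
def ApproxBelowBy {n : ℕ} (D : Set (Fin n → U)) {m : ℕ}
    (φ : L.Formula (Fin m ⊕ Fin n)) : Prop :=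
  ∀ B : Finset U, ∃ b : Fin m → U,
    phiSet L U φ b ∩ tuplesIn U ↑B = D ∩ tuplesIn U ↑B ∧ phiSet L U φ b ⊆ D

/-- `D` is approximable from above by `φ(x,z)`. -/
def ApproxAboveBy {n : ℕ} (D : Set (Fin n → U)) {m : ℕ}
    (φ : L.Formula (Fin m ⊕ Fin n)) : Prop :=
  ∀ B : Finset U, ∃ b : Fin m → U,
    phiSet L U φ b ∩ tuplesIn U ↑B = D ∩ tuplesIn U ↑B ∧ D ⊆ phiSet L U φ b

def Approximable {n : ℕ} (D : Set (Fin n → U)) : Prop :=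
  ∃ (m : ℕ) (φ : L.Formula (Fin m ⊕ Fin n)), ApproxBy L U D φ

def ApproxBelow {n : ℕ} (D : Set (Fin n → U)) : Prop :=
  ∃ (m : ℕ) (φ : L.Formula (Fin m ⊕ Fin n)), ApproxBelowBy L U D φ

def ApproxAbove {n : ℕ} (D : Set (Fin n → U)) : Prop :=
  ∃ (m : ℕ) (φ : L.Formula (Fin m ⊕ Fin n)), ApproxAboveBy L U D φ

/-- The formula `φ(x, a)` (an `L(U)`-formula in the variables `x`), obtained by
substituting the tuple `a` for the variables `z` in `φ(x,z)`. -/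
def instFormula {m n : ℕ} (φ : L.Formula (Fin m ⊕ Fin n)) (a : Fin n → U) :
    (L[[U]]).Formula (Fin m) :=
  ((L.lhomWithConstants U).onFormula φ).subst
    (Sum.elim (fun i => Term.var i) (fun j => (L.con (a j)).term))

/-- A (complete) global type in the variables `x = (x_0, ..., x_{m-1})` : a maximal
finitely realized set of `L(U)`-formulas. -/
def IsGlobalType {m : ℕ} (p : Set ((L[[U]]).Formula (Fin m))) : Prop :=
  (∀ s : Finset ((L[[U]]).Formula (Fin m)), ↑s ⊆ p →
    ∃ b : Fin m → U, ∀ φ ∈ s, FRealize U (addAllConsts U iS) φ b) ∧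
  ∀ φ : (L[[U]]).Formula (Fin m), φ ∈ p ↔ φ.not ∉ p

/-- `D` is externally definable: `D = {a : φ(x,a) ∈ p}` for some global type `p` and
formula `φ(x,z)`. -/
def ExtDefinable {n : ℕ} (D : Set (Fin n → U)) : Prop :=
  ∃ (m : ℕ) (φ : L.Formula (Fin m ⊕ Fin n)) (p : Set ((L[[U]]).Formula (Fin m))),
    IsGlobalType L U p ∧ D = {a | instFormula L U φ a ∈ p}

/-- A sequence of `n`-tuples is indiscernible with respect to the formulas of a
structure `S` on `U`. -/
def IndiscIn {L' : FirstOrder.Language.{u, u}} (S : L'.Structure U) {n : ℕ} {I : Type*} [LinearOrder I]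
    (a : I → Fin n → U) : Prop :=
  ∀ (k : ℕ) (i j : Fin k → I), StrictMono i → StrictMono j →
    ∀ φ : L'.Formula (Fin k × Fin n),
      FRealize U S φ (fun q => a (i q.1) q.2) ↔ FRealize U S φ (fun q => a (j q.1) q.2)

/-- An `A`-indiscernible sequence of `n`-tuples. -/
def IndiscOver {n : ℕ} (A : Set U) {I : Type*} [LinearOrder I] (a : I → Fin n → U) : Prop :=
  IndiscIn U (addConsts U iS A) a


/-- `D` is Lascar invariant over `A` : `D` is invariant over every small model containing `A`. -/
def LascarInv {n : ℕ} (A : Set U) (D : Set (Fin n → U)) : Prop :=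
  ∀ M : L.ElementarySubstructure U, A ⊆ (M : L.Substructure U) →
    #((M : L.Substructure U) : Set U) < #U →
    ∀ f ∈ AutFix L U ((M : L.Substructure U) : Set U), imgSet L U f D = D

/-- The cardinality of the set `L(A)` of formulas with parameters in `A`. -/
def formulaCard (A : Set U) : Cardinal.{u} :=
  #(Σ k : ℕ, (L[[↥A]]).Formula (Fin k))

/-- `u` locally covers `B` (relative to the cardinal `κ`). -/
def LocallyCovers {α : Type u} (κ : Cardinal.{u}) (u : Set (Set α)) (B : Set α) : Prop :=
  ∀ K : Set α, K ⊆ B → #K = κ → ∀ k : ℕ, ∃ D ∈ u, (k : Cardinal.{u}) ≤ #(↥(K ∩ D))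

/-- `φ(x, b)` divides over `A` : for some infinite `K ⊆ o(b/A)` and some `k`,
`{φ(x,c) : c ∈ K}` is `k`-inconsistent. -/
def Divides {m n : ℕ} (φ : L.Formula (Fin m ⊕ Fin n)) (b : Fin n → U) (A : Set U) : Prop :=
  ∃ K : Set (Fin n → U), K ⊆ oTuple L U A b ∧ K.Infinite ∧
    ∃ k : ℕ, ∀ s : Finset (Fin n → U), ↑s ⊆ K → s.card = k →
      ¬∃ x : Fin m → U, ∀ c ∈ s, φ.Realize (Sum.elim x c)

/-- `C` is pseudo-invariant over `A` : `e(C)` locally covers `o(b/A)` for every `b ∈ C`. -/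
def PseudoInv {k : ℕ} (A : Set U) (C : Set (Fin k → U)) : Prop :=
  ∀ b ∈ C, LocallyCovers (#U) (eSet L U (∅ : Set U) C) (oTuple L U A b)

/-- A family `u` of subsets of `U^n` is closed: it is cut out by a set of sentences with a
second-order variable, i.e. sentences of the language expanded by a predicate. -/
def ClosedFam {n : ℕ} (u : Set (Set (Fin n → U))) : Prop :=
  ∃ p : Set ((expLang L n).Sentence),
    u = {D | ∀ φ ∈ p, SentRealize U (expStr L U D) φ}

/-- `κ` is a Ramsey cardinal : every `2`-coloring of the finite subsets of a set of size `κ`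
has a homogeneous set of size `κ`. -/
def IsRamseyCard (κ : Cardinal.{u}) : Prop :=
  ∀ (X : Type u), #X = κ → ∀ c : Finset X → Bool,
    ∃ H : Set X, #H = κ ∧
      ∀ s t : Finset X, ↑s ⊆ H → ↑t ⊆ H → s.card = t.card → c s = c t

/-- The formula `φ(x,z)` is NIP: the family of its instances `φ(a,U)` has finite
VC dimension. -/
def FormulaNIP {m n : ℕ} (φ : L.Formula (Fin m ⊕ Fin n)) : Prop :=
  FiniteVC {E : Set (Fin n → U) | ∃ b : Fin m → U, E = phiSet L U φ b}

/-- The theory of `U` is NIP: every formula is NIP. -/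
def TheoryNIP : Prop :=
  ∀ (m n : ℕ) (φ : L.Formula (Fin m ⊕ Fin n)), FormulaNIP L U φ

/-- A global type `p(z)` is invariant over `A` : each of the sets `D_{p,φ}` is fixed
(setwise) by every automorphism fixing `A` pointwise. -/
def GlobalTypeInv {n : ℕ} (A : Set U) (p : Set ((L[[U]]).Formula (Fin n))) : Prop :=
  ∀ (k : ℕ) (φ : L.Formula (Fin n ⊕ Fin k)) (f : U ≃[L] U), f ∈ AutFix L U A →
    imgSet L U f {a | instFormula L U φ a ∈ p} = {a | instFormula L U φ a ∈ p}

/-- `M` (a subset of `U`) is `L(A;C)`-saturated : every finitely realized type `p(x) ⊆ L(A;C)`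
is realized by a tuple from `M`. -/
def LACSat {n : ℕ} (C : Set (Fin n → U)) (A : Set U) (M : Set U) : Prop :=
  ∀ (m : ℕ) (p : Set (((expLang L n)[[↥A]]).Formula (Fin m))),
    (∀ s : Finset (((expLang L n)[[↥A]]).Formula (Fin m)), ↑s ⊆ p →
      ∃ b : Fin m → U, ∀ φ ∈ s, FRealize U (addConsts U (expStr L U C) A) φ b) →
    ∃ b : Fin m → U, (∀ i, b i ∈ M) ∧
      ∀ φ ∈ p, FRealize U (addConsts U (expStr L U C) A) φ b

/-- The inclusion of languages `L(M) → L(U)` for `M : Set U`. -/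
def liftConsts (M : Set U) : (L[[↥M]]) →ᴸ (L[[U]]) :=
  LHom.sumMap (LHom.id L) (LHom.constantsOnMap Subtype.val)


section AuxHomog

variable {L : FirstOrder.Language.{u, u}} {U : Type u} [iS : L.Structure U]

/-- An elementary set of pairs: all finite tuples from it have matching
first/second coordinates types. -/
def Elem (L : FirstOrder.Language.{u, u}) {U : Type u} [iS : L.Structure U]
    (p : Set (U × U)) : Prop :=
  ∀ (α : Type u) [Fintype α], ∀ (t : α → U × U), (∀ i, t i ∈ p) →
    ∀ φ : L.Formula α, (φ.Realize (fun i => (t i).1) ↔ φ.Realize (fun i => (t i).2))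

theorem Elem.mono {p q : Set (U × U)} (h : Elem L p) (hq : q ⊆ p) : Elem L q :=
  fun α _ t ht φ => h α t (fun i => hq (ht i)) φ

theorem Elem.swap {p : Set (U × U)} (h : Elem L p) : Elem L (Prod.swap '' p) := by
  intro α _ t ht φ
  have ht' : ∀ i, (t i).swap ∈ p := by
    intro i
    obtain ⟨x, hx, he⟩ := ht i
    rw [← he]; simpa using hx
  exact (h α (fun i => (t i).swap) ht' φ).symm

theorem swap_swap_image {U : Type u} (p : Set (U × U)) :
    Prod.swap '' (Prod.swap '' p) = p := by
  rw [Set.image_image]; simp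

/-- Use an elementary set with a tuple indexed by a small finite type. -/
theorem Elem.realize0 {p : Set (U × U)} (h : Elem L p) {α : Type} [Fintype α]
    (t : α → U × U) (ht : ∀ i, t i ∈ p) (φ : L.Formula α) :
    (φ.Realize (fun i => (t i).1) ↔ φ.Realize (fun i => (t i).2)) := by
  simpa [Formula.realize_relabel, Function.comp_def] using
    h (ULift.{u} α) (fun i => t i.down) (fun i => ht i.down) (φ.relabel ULift.up)

theorem Elem.eq_iff {p : Set (U × U)} (h : Elem L p) {x y : U × U}
    (hx : x ∈ p) (hy : y ∈ p) : x.1 = y.1 ↔ x.2 = y.2 := by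
  have := h.realize0 ![x, y] (by intro i; fin_cases i <;> assumption)
    (Term.equal (Term.var 0) (Term.var 1))
  simpa [Term.realize] using this

/-- Realization of a formula after substituting constants from `A` for some variables. -/
theorem realize_substConsts {A : Set U} {α : Type*} {β : Type*}
    (φ : L.Formula α) (σ : α → ↥A ⊕ β) (v : β → U) :
    FRealize U (addConsts U iS A)
      (((L.lhomWithConstants ↥A).onFormula φ).subst
        (fun i => Sum.elim (fun a => (L.con a).term) (fun j => Term.var j) (σ i))) v
      ↔ φ.Realize (fun i => Sum.elim (fun a : ↥A => (a : U)) v (σ i)) := by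
  have h0 : Formula.Realize (M := U)
      (((L.lhomWithConstants ↥A).onFormula φ).subst
        (fun i => Sum.elim (fun a => (L.con a).term) (fun j => Term.var j) (σ i))) v
      ↔ Formula.Realize ((L.lhomWithConstants ↥A).onFormula φ)
        (fun i => Term.realize v
          (Sum.elim (fun a => (L.con a).term) (fun j => Term.var j) (σ i))) :=
    BoundedFormula.realize_subst
  have h1 : FRealize U (addConsts U iS A)
      (((L.lhomWithConstants ↥A).onFormula φ).subst
        (fun i => Sum.elim (fun a => (L.con a).term) (fun j => Term.var j) (σ i))) v
      ↔ Formula.Realize ((L.lhomWithConstants ↥A).onFormula φ)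
        (fun i => Term.realize v
          (Sum.elim (fun a => (L.con a).term) (fun j => Term.var j) (σ i))) := h0
  rw [h1, LHom.realize_onFormula]
  have he : (fun i => Term.realize (M := U) v
      (Sum.elim (fun a => (L.con a).term) (fun j => Term.var j) (σ i)))
      = fun i => Sum.elim (fun a : ↥A => (a : U)) v (σ i) := by
    funext i
    cases h : σ i with
    | inl a => simp [h, Term.realize_con]
    | inr j => simp [h]
  rw [he]

/-- The `L(B)`-formula `φ(x, c)` obtained by substituting constants. -/
def cform {B : Set U} {α : Type u} (φ : L.Formula (Fin 1 ⊕ α)) (c : α → ↥B) :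
    (L[[↥B]]).Formula (Fin 1) :=
  ((L.lhomWithConstants ↥B).onFormula φ).subst
    (fun i => Sum.elim (fun a => (L.con a).term) (fun j => Term.var j)
      (Sum.elim (fun i : Fin 1 => Sum.inr i) (fun j => Sum.inl (c j)) i))

theorem realize_cform {B : Set U} {α : Type u} (φ : L.Formula (Fin 1 ⊕ α)) (c : α → ↥B)
    (w : Fin 1 → U) :
    FRealize U (addConsts U iS B) (cform φ c) w ↔
      φ.Realize (Sum.elim w (fun j => ((c j : U)))) := by
  rw [cform, realize_substConsts]
  have he : (fun i => Sum.elim (fun a : ↥B => (a : U)) w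
      (Sum.elim (fun i : Fin 1 => Sum.inr i) (fun j => Sum.inl (c j)) i))
      = Sum.elim w (fun j => ((c j : U))) := by
    funext i; cases i <;> simp
  rw [he]

theorem elem_extend (hsat : IsSatStr U iS) {p : Set (U × U)} (hp : Elem L p)
    (hsmall : #p < #U) (u : U) : ∃ v : U, Elem L (insert (u, v) p) := by
  classical
  by_cases hin : ∃ v, (u, v) ∈ p
  · obtain ⟨v, hv⟩ := hin
    exact ⟨v, by rwa [Set.insert_eq_self.2 hv]⟩
  have hB : #(Prod.snd '' p : Set U) < #U := lt_of_le_of_lt Cardinal.mk_image_le hsmall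
  set B : Set U := Prod.snd '' p with hBdef
  have hmem : ∀ (β : Type u) (t : β → U × U), (∀ i, t i ∈ p) → ∀ i, (t i).2 ∈ B :=
    fun β t ht i => ⟨t i, ht i, rfl⟩
  set q : Set ((L[[↥B]]).Formula (Fin 1)) :=
    {ψ | ∃ (β : Type u) (_ : Fintype β) (φ : L.Formula (Fin 1 ⊕ β)) (t : β → U × U)
      (ht : ∀ i, t i ∈ p), ψ = cform φ (fun i => ⟨(t i).2, hmem β t ht i⟩) ∧
        φ.Realize (Sum.elim (fun _ : Fin 1 => u) (fun i => (t i).1))} with hqdef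
  have hfin : ∀ s : Finset ((L[[↥B]]).Formula (Fin 1)), ↑s ⊆ q →
      ∃ w : Fin 1 → U, ∀ φ ∈ s, FRealize U (addConsts U iS B) φ w := by
    intro s hs
    have hdat : ∀ ψ : {x // x ∈ s}, (ψ : (L[[↥B]]).Formula (Fin 1)) ∈ q := fun ψ => hs ψ.2
    simp only [hqdef, Set.mem_setOf_eq] at hdat
    choose β instβ φf tf htf hψ hru using hdat
    haveI : ∀ ψ, Fintype (β ψ) := instβ
    let γ : Type u := Σ ψ : {x // x ∈ s}, β ψ
    let T : γ → U × U := fun x => tf x.1 x.2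
    have hT : ∀ x, T x ∈ p := fun x => htf x.1 x.2
    let Θ₀ : L.Formula (Fin 1 ⊕ γ) :=
      BoundedFormula.iInf
        (fun ψ : {x // x ∈ s} =>
          (φf ψ).relabel (Sum.map id (fun i => (⟨ψ, i⟩ : γ))))
    let Θ : L.Formula γ := (Θ₀.relabel (Sum.elim Sum.inr Sum.inl)).iExs (Fin 1)
    have hΘ : ∀ g : γ → U, Θ.Realize g ↔ ∃ w : Fin 1 → U,
        ∀ ψ : {x // x ∈ s}, (φf ψ).Realize (Sum.elim w (fun i => g ⟨ψ, i⟩)) := by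
      intro g
      have e0 : Θ.Realize g ↔ ∃ w : Fin 1 → U,
          Θ₀.Realize (fun a => Sum.elim g w (Sum.elim Sum.inr Sum.inl a)) :=
        Formula.realize_iExs.trans (by simp only [Formula.realize_relabel]; exact Iff.rfl)
      rw [e0]
      apply exists_congr; intro w
      have e1 : Θ₀.Realize (fun a => Sum.elim g w (Sum.elim Sum.inr Sum.inl a)) ↔
          ∀ ψ ∈ Finset.univ, Formula.Realize (M := U)
            ((φf ψ).relabel (Sum.map id (fun i => (⟨ψ, i⟩ : γ))))
            (fun a => Sum.elim g w (Sum.elim Sum.inr Sum.inl a)) :=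
        BoundedFormula.realize_iInf.trans
          (by simp only [Finset.mem_univ, true_imp_iff]; exact Iff.rfl)
      rw [e1]
      simp only [Finset.mem_univ, forall_true_left]
      apply forall_congr'; intro ψ
      rw [Formula.realize_relabel]
      have e2 : ((fun a => Sum.elim g w (Sum.elim Sum.inr Sum.inl a)) ∘
          (Sum.map id (fun i => (⟨ψ, i⟩ : γ)))) = Sum.elim w (fun i => g ⟨ψ, i⟩) := by
        funext a; cases a <;> rfl
      rw [e2]
    have hu : Θ.Realize (fun x => (T x).1) := by
      rw [hΘ]
      exact ⟨fun _ => u, fun ψ => hru ψ⟩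
    have hv := hp γ T hT Θ
    obtain ⟨w, hwz⟩ := (hΘ (fun x => (T x).2)).mp (hv.mp hu)
    refine ⟨w, fun ψm hmem' => ?_⟩
    have hh := hψ ⟨ψm, hmem'⟩
    rw [show ψm = ((⟨ψm, hmem'⟩ : {x // x ∈ s}) : (L[[↥B]]).Formula (Fin 1)) from rfl, hh,
      realize_cform]
    exact hwz ⟨ψm, hmem'⟩
  obtain ⟨w, hw⟩ := hsat B hB 1 q hfin
  have key : ∀ (β : Type u) [Fintype β] (φ : L.Formula (Fin 1 ⊕ β)) (t : β → U × U),
      (∀ i, t i ∈ p) →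
      (φ.Realize (Sum.elim (fun _ : Fin 1 => u) (fun i => (t i).1)) ↔
       φ.Realize (Sum.elim w (fun i => (t i).2))) := by
    intro β instβ φ t ht
    constructor
    · intro h
      have hq : cform φ (fun i => ⟨(t i).2, hmem β t ht i⟩) ∈ q := by
        rw [hqdef]; exact ⟨β, instβ, φ, t, ht, rfl, h⟩
      have := hw _ hq
      rw [realize_cform] at this
      exact this
    · intro h
      by_contra hne
      have hq : cform φ.not (fun i => ⟨(t i).2, hmem β t ht i⟩) ∈ q := by
        rw [hqdef]
        exact ⟨β, instβ, φ.not, t, ht, rfl, by rwa [Formula.realize_not]⟩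
      have := hw _ hq
      rw [realize_cform, Formula.realize_not] at this
      exact this h
  refine ⟨w 0, ?_⟩
  intro α instα t' ht' φ0
  by_cases hall : ∀ i, t' i = (u, w 0)
  · have hthis := key PEmpty (φ0.relabel (fun _ => Sum.inl 0)) (fun i => i.elim)
      (fun i => i.elim)
    rw [Formula.realize_relabel, Formula.realize_relabel] at hthis
    have e1 : (fun i => (t' i).1) =
        ((Sum.elim (fun _ : Fin 1 => u) (fun i : PEmpty => ((i.elim : U × U)).1)) ∘
          (fun _ : α => Sum.inl 0)) := by
      funext i; rw [hall i]; rfl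
    have e2 : (fun i => (t' i).2) =
        ((Sum.elim w (fun i : PEmpty => ((i.elim : U × U)).2)) ∘
          (fun _ : α => Sum.inl 0)) := by
      funext i; rw [hall i]; rfl
    rw [e1, e2]
    exact hthis
  · push_neg at hall
    obtain ⟨i₀, hi₀⟩ := hall
    have hi₀p : t' i₀ ∈ p := by
      rcases ht' i₀ with h | h
      · exact absurd h hi₀
      · exact h
    classical
    set tt : α → U × U := fun i => if t' i = (u, w 0) then t' i₀ else t' i with htt_def
    have htt : ∀ i, tt i ∈ p := by
      intro i
      by_cases h : t' i = (u, w 0)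
      · simp only [htt_def, h, if_pos]; exact hi₀p
      · simp only [htt_def, if_neg h]
        rcases ht' i with h' | h'
        · exact absurd h' h
        · exact h'
    set ρ : α → Fin 1 ⊕ α := fun i => if t' i = (u, w 0) then Sum.inl 0 else Sum.inr i
      with hρ_def
    have hthis := key α (φ0.relabel ρ) tt htt
    rw [Formula.realize_relabel, Formula.realize_relabel] at hthis
    have e1 : ((Sum.elim (fun _ : Fin 1 => u) (fun i => (tt i).1)) ∘ ρ) =
        (fun i => (t' i).1) := by
      funext i
      by_cases h : t' i = (u, w 0) <;>
        simp [hρ_def, htt_def, h]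
    have e2 : ((Sum.elim w (fun i => (tt i).2)) ∘ ρ) = (fun i => (t' i).2) := by
      funext i
      by_cases h : t' i = (u, w 0) <;>
        simp [hρ_def, htt_def, h]
    rw [e1, e2] at hthis
    exact hthis

theorem elem_extend2 (hsat : IsSatStr U iS) (hUinf : ℵ₀ ≤ #U) {p : Set (U × U)}
    (hp : Elem L p) (hsmall : #p < #U) (u : U) :
    ∃ v w, Elem L (insert (w, u) (insert (u, v) p)) := by
  obtain ⟨v, hv⟩ := elem_extend hsat hp hsmall u
  have h1 : #(insert (u, v) p : Set (U × U)) < #U :=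
    lt_of_le_of_lt Cardinal.mk_insert_le
      (Cardinal.add_lt_of_lt hUinf hsmall (lt_of_lt_of_le Cardinal.one_lt_aleph0 hUinf))
  have h2 : #(Prod.swap '' (insert (u, v) p) : Set (U × U)) < #U :=
    lt_of_le_of_lt Cardinal.mk_image_le h1
  obtain ⟨w, hw⟩ := elem_extend hsat hv.swap h2 u
  refine ⟨v, w, ?_⟩
  have h3 := hw.swap
  rw [Set.image_insert_eq, swap_swap_image] at h3
  exact h3

open Classical in
variable (L) in
/-- One step of the back-and-forth: add `u` to the domain and to the range. -/
noncomputable def stepPair (p : Set (U × U)) (u : U) : Set (U × U) :=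
  if h : ∃ v w, Elem L (insert (w, u) (insert (u, v) p)) then
    {(u, h.choose), (h.choose_spec.choose, u)}
  else ∅

theorem stepPair_spec {p : Set (U × U)} {u : U}
    (h : ∃ v w, Elem L (insert (w, u) (insert (u, v) p))) :
    Elem L (p ∪ stepPair L p u) ∧ (∃ v, (u, v) ∈ stepPair L p u) ∧
      (∃ w, (w, u) ∈ stepPair L p u) := by
  rw [stepPair, dif_pos h]
  refine ⟨?_, ⟨h.choose, by simp⟩, ⟨h.choose_spec.choose, by simp⟩⟩
  have hE := h.choose_spec.choose_spec
  have heq : p ∪ {(u, h.choose), (h.choose_spec.choose, u)} =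
      insert (h.choose_spec.choose, u) (insert (u, h.choose) p) := by
    ext x; simp [Set.mem_insert_iff]; tauto
  rw [heq]
  exact hE

theorem stepPair_card (p : Set (U × U)) (u : U) : #(stepPair L p u) ≤ 2 := by
  rw [stepPair]
  split
  · refine le_trans Cardinal.mk_insert_le ?_
    rw [Cardinal.mk_singleton]
    norm_num
  · simp

variable (L) in
/-- The transfinite back-and-forth chain: the (at most two) pairs added at step `w`. -/
noncomputable def chainF {W : Type u} [LinearOrder W] [WellFoundedLT W]
    (p₀ : Set (U × U)) (e : W → U) : W → Set (U × U) :=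
  (wellFounded_lt (α := W)).fix
    (fun w ih => stepPair L (p₀ ∪ ⋃ v, ⋃ h : v < w, ih v h) (e w))

theorem chainF_eq {W : Type u} [LinearOrder W] [WellFoundedLT W]
    (p₀ : Set (U × U)) (e : W → U) (w : W) :
    chainF L p₀ e w
      = stepPair L (p₀ ∪ ⋃ v, ⋃ _h : v < w, chainF L p₀ e v) (e w) :=
  WellFounded.fix_eq _ _ _

theorem elem_base {A : Set U} {β : Type} (b c : β → U)
    (htp : ∀ φ : (L[[↥A]]).Formula β,
      FRealize U (addConsts U iS A) φ b ↔ FRealize U (addConsts U iS A) φ c) :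
    Elem L ({x : U × U | ∃ a : ↥A, x = ((a : U), (a : U))} ∪
      Set.range (fun i => (b i, c i))) := by
  intro α _ t ht φ
  have hsel : ∀ i, ∃ x : ↥A ⊕ β, (∀ a, x = Sum.inl a → t i = ((a : U), (a : U))) ∧
      (∀ j, x = Sum.inr j → t i = (b j, c j)) := by
    intro i
    rcases ht i with ha | hr
    · obtain ⟨a, ha⟩ := ha
      exact ⟨Sum.inl a, fun a' h' => by rw [ha, Sum.inl.inj h'], fun j h' => by simp at h'⟩
    · obtain ⟨j, hj⟩ := hr
      exact ⟨Sum.inr j, fun a' h' => by simp at h', fun j' h' => by rw [← hj, Sum.inr.inj h']⟩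
  choose ρ h1 h2 using hsel
  have hb := realize_substConsts (iS := iS) φ ρ b
  have hc := realize_substConsts (iS := iS) φ ρ c
  have eb : (fun i => Sum.elim (fun a : ↥A => (a : U)) b (ρ i)) = fun i => (t i).1 := by
    funext i
    cases h : ρ i with
    | inl a => rw [h1 i a h]; simp
    | inr j => rw [h2 i j h]; simp
  have ec : (fun i => Sum.elim (fun a : ↥A => (a : U)) c (ρ i)) = fun i => (t i).2 := by
    funext i
    cases h : ρ i with
    | inl a => rw [h1 i a h]; simp
    | inr j => rw [h2 i j h]; simp
  rw [eb] at hb; rw [ec] at hc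
  rw [← hb, ← hc]
  exact htp _

theorem strong_homog (hsat : IsSatStr U iS) (hUinf : ℵ₀ ≤ #U) {A : Set U} (hA : #A < #U)
    {β : Type} [Fintype β] (b c : β → U)
    (htp : ∀ φ : (L[[↥A]]).Formula β,
      FRealize U (addConsts U iS A) φ b ↔ FRealize U (addConsts U iS A) φ c) :
    ∃ f : U ≃[L] U, f ∈ AutFix L U A ∧ ∀ i, f (b i) = c i := by
  classical
  obtain ⟨e⟩ : Nonempty ((#U).ord.ToType ≃ U) := Cardinal.eq.mp (Cardinal.mk_ord_toType #U)
  set W := (#U).ord.ToType with hWdef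
  set p₀ : Set (U × U) := {x : U × U | ∃ a : ↥A, x = ((a : U), (a : U))} ∪
      Set.range (fun i => (b i, c i)) with hp₀def
  have hp₀ : Elem L p₀ := elem_base b c htp
  have hp₀small : #p₀ < #U := by
    refine lt_of_le_of_lt (Cardinal.mk_union_le _ _) (Cardinal.add_lt_of_lt hUinf ?_ ?_)
    · refine lt_of_le_of_lt ?_ hA
      have he : {x : U × U | ∃ a : ↥A, x = ((a : U), (a : U))} =
          Set.range (fun a : ↥A => ((a : U), (a : U))) := by
        ext x; simp [eq_comm]
      rw [he]
      exact Cardinal.mk_range_le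
    · exact lt_of_lt_of_le (Set.finite_range _).lt_aleph0 hUinf
  set F : W → Set (U × U) := chainF L p₀ e with hFdef
  set Pb : W → Set (U × U) := fun w => p₀ ∪ ⋃ v, ⋃ _h : v < w, F v with hPbdef
  set Pu : W → Set (U × U) := fun w => Pb w ∪ F w with hPudef
  have hFeq : ∀ w, F w = stepPair L (Pb w) (e w) := fun w => chainF_eq p₀ e w
  have hFcard : ∀ v, #(F v) ≤ 2 := by
    intro v; rw [hFeq v]; exact stepPair_card _ _
  have htwo : (2 : Cardinal) < #U :=
    lt_of_lt_of_le (by exact_mod_cast Cardinal.nat_lt_aleph0 2) hUinf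
  have hPbsmall : ∀ w, #(Pb w) < #U := by
    intro w
    refine lt_of_le_of_lt (Cardinal.mk_union_le _ _)
      (Cardinal.add_lt_of_lt hUinf hp₀small ?_)
    have h1 : (⋃ v, ⋃ _h : v < w, F v) = ⋃ v : {v : W // v < w}, F (v : W) := by
      ext x; simp
    rw [h1]
    calc #(⋃ v : {v : W // v < w}, F (v : W))
        ≤ Cardinal.sum (fun v : {v : W // v < w} => #(F (v : W))) :=
          Cardinal.mk_iUnion_le_sum_mk
      _ ≤ Cardinal.sum (fun _ : {v : W // v < w} => 2) :=
          Cardinal.sum_le_sum _ _ (fun v => hFcard _)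
      _ = #{v : W // v < w} * 2 := Cardinal.sum_const' _ _
      _ < #U := Cardinal.mul_lt_of_lt hUinf (Cardinal.mk_Iio_ord_toType w) htwo
  have hinv : ∀ w, Elem L (Pu w) ∧ (∃ v, (e w, v) ∈ F w) ∧ (∃ v, (v, e w) ∈ F w) := by
    intro w
    induction w using WellFounded.induction (wellFounded_lt (α := W)) with
    | _ w ih =>
    have hPbElem : Elem L (Pb w) := by
      intro α instα t ht φ
      by_cases hcase : ∀ i, t i ∈ p₀
      · exact hp₀ α t hcase φ
      · push_neg at hcase
        obtain ⟨i₁, hi₁⟩ := hcase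
        have hvex : ∀ i, ∃ v : W, v < w ∧ (t i ∈ p₀ ∨ t i ∈ F v) := by
          intro i
          rcases ht i with h | h
          · rcases ht i₁ with h' | h'
            · exact absurd h' hi₁
            · simp only [Set.mem_iUnion] at h'
              obtain ⟨v, hv, _⟩ := h'
              exact ⟨v, hv, Or.inl h⟩
          · simp only [Set.mem_iUnion] at h
            obtain ⟨v, hv, hmem⟩ := h
            exact ⟨v, hv, Or.inr hmem⟩
        choose g hg1 hg2 using hvex
        have hne : (Finset.univ.image g).Nonempty :=
          ⟨g i₁, Finset.mem_image_of_mem g (Finset.mem_univ _)⟩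
        set vm := (Finset.univ.image g).max' hne with hvm
        have hvmw : vm < w := by
          obtain ⟨i2, _, hi2⟩ := Finset.mem_image.mp ((Finset.univ.image g).max'_mem hne)
          rw [← hvm] at hi2
          rw [← hi2]
          exact hg1 i2
        have hsub : ∀ i, t i ∈ Pu vm := by
          intro i
          rcases hg2 i with h | h
          · exact Or.inl (Or.inl h)
          · have hle : g i ≤ vm :=
              Finset.le_max' _ _ (Finset.mem_image_of_mem g (Finset.mem_univ _))
            rcases lt_or_eq_of_le hle with hlt | heq
            · exact Or.inl (Or.inr (Set.mem_iUnion.mpr ⟨g i, Set.mem_iUnion.mpr ⟨hlt, h⟩⟩))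
            · exact Or.inr (heq ▸ h)
        exact (ih vm hvmw).1 α t hsub φ
    have hcond : ∃ v v', Elem L (insert (v', e w) (insert (e w, v) (Pb w))) :=
      elem_extend2 hsat hUinf hPbElem (hPbsmall w) (e w)
    have hspec := stepPair_spec (p := Pb w) (u := e w) hcond
    rw [← hFeq w] at hspec
    exact ⟨hspec.1, hspec.2.1, hspec.2.2⟩
  set P : Set (U × U) := p₀ ∪ ⋃ v, F v with hPdef
  have hPall : Elem L P := by
    intro α instα t ht φ
    by_cases hcase : ∀ i, t i ∈ p₀
    · exact hp₀ α t hcase φ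
    · push_neg at hcase
      obtain ⟨i₁, hi₁⟩ := hcase
      have hvex : ∀ i, ∃ v : W, t i ∈ p₀ ∨ t i ∈ F v := by
        intro i
        rcases ht i with h | h
        · rcases ht i₁ with h' | h'
          · exact absurd h' hi₁
          · simp only [Set.mem_iUnion] at h'
            obtain ⟨v, _⟩ := h'
            exact ⟨v, Or.inl h⟩
        · simp only [Set.mem_iUnion] at h
          obtain ⟨v, hmem⟩ := h
          exact ⟨v, Or.inr hmem⟩
      choose g hg using hvex
      have hne : (Finset.univ.image g).Nonempty :=
        ⟨g i₁, Finset.mem_image_of_mem g (Finset.mem_univ _)⟩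
      set vm := (Finset.univ.image g).max' hne with hvm
      have hsub : ∀ i, t i ∈ Pu vm := by
        intro i
        rcases hg i with h | h
        · exact Or.inl (Or.inl h)
        · have hle : g i ≤ vm :=
            Finset.le_max' _ _ (Finset.mem_image_of_mem g (Finset.mem_univ _))
          rcases lt_or_eq_of_le hle with hlt | heq
          · exact Or.inl (Or.inr (Set.mem_iUnion.mpr ⟨g i, Set.mem_iUnion.mpr ⟨hlt, h⟩⟩))
          · exact Or.inr (heq ▸ h)
      exact (hinv vm).1 α t hsub φ
  have hPp₀ : p₀ ⊆ P := Set.subset_union_left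
  have htot : ∀ u : U, ∃ v, (u, v) ∈ P := by
    intro u
    obtain ⟨v, hv⟩ := (hinv (e.symm u)).2.1
    rw [e.apply_symm_apply] at hv
    exact ⟨v, Or.inr (Set.mem_iUnion.mpr ⟨e.symm u, hv⟩)⟩
  have hcot : ∀ u : U, ∃ v, (v, u) ∈ P := by
    intro u
    obtain ⟨v, hv⟩ := (hinv (e.symm u)).2.2
    rw [e.apply_symm_apply] at hv
    exact ⟨v, Or.inr (Set.mem_iUnion.mpr ⟨e.symm u, hv⟩)⟩
  let f0 : U → U := fun u => (htot u).choose
  have hf0 : ∀ u, (u, f0 u) ∈ P := fun u => (htot u).choose_spec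
  let g0 : U → U := fun u => (hcot u).choose
  have hg0 : ∀ u, (g0 u, u) ∈ P := fun u => (hcot u).choose_spec
  have hgf : ∀ u, g0 (f0 u) = u := fun u =>
    (hPall.eq_iff (x := (g0 (f0 u), f0 u)) (y := (u, f0 u)) (hg0 (f0 u)) (hf0 u)).mpr rfl
  have hfg : ∀ u, f0 (g0 u) = u := fun u =>
    (hPall.eq_iff (x := (g0 u, f0 (g0 u))) (y := (g0 u, u)) (hf0 (g0 u)) (hg0 u)).mp rfl
  have hmapfun : ∀ {l : ℕ} (fn : L.Functions l) (x : Fin l → U),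
      f0 (Structure.funMap fn x) = Structure.funMap fn (f0 ∘ x) := by
    intro l fn x
    have hmem : ∀ i : Fin l ⊕ Fin 1, (Sum.elim (fun i => (x i, f0 (x i)))
        (fun _ : Fin 1 => (Structure.funMap fn x, f0 (Structure.funMap fn x))) i) ∈ P := by
      intro i; cases i
      · exact hf0 _
      · exact hf0 _
    have hre := hPall.realize0 _ hmem
      (Term.equal (Term.func fn (fun i => Term.var (Sum.inl i))) (Term.var (Sum.inr 0)))
    simp only [Formula.realize_equal, Term.realize, Sum.elim_inl, Sum.elim_inr] at hre
    exact ((hre.mp trivial).symm)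
  have hmaprel : ∀ {l : ℕ} (r : L.Relations l) (x : Fin l → U),
      (Structure.RelMap r (f0 ∘ x) ↔ Structure.RelMap r x) := by
    intro l r x
    have hmem : ∀ i : Fin l, ((x i, f0 (x i))) ∈ P := fun i => hf0 _
    have hre := hPall.realize0 (fun i => (x i, f0 (x i))) hmem
      (Relations.formula r (fun i => Term.var i))
    simp only [Formula.realize_rel, Term.realize] at hre
    exact hre.symm
  refine ⟨⟨⟨f0, g0, hgf, hfg⟩, fun {l} fn x => hmapfun fn x, fun {l} r x => hmaprel r x⟩,
    ?_, ?_⟩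
  · intro a ha
    have hmem : ((a : U), (a : U)) ∈ P := hPp₀ (Or.inl ⟨⟨a, ha⟩, rfl⟩)
    exact (hPall.eq_iff (x := (a, f0 a)) (y := (a, a)) (hf0 a) hmem).mp rfl
  · intro i
    have hmem : (b i, c i) ∈ P := hPp₀ (Or.inr ⟨i, rfl⟩)
    exact (hPall.eq_iff (x := (b i, f0 (b i))) (y := (b i, c i)) (hf0 (b i)) hmem).mp rfl

end AuxHomog

/-- if `o(D/A)` has finite VC dimension then the truth values `a_i ∈ D` along
any `A`-indiscernible sequence are eventually constant. -/
theorem stmt5 (L : FirstOrder.Language.{u, u}) (U : Type u) [iS : L.Structure U]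
    (hsat : IsSatStr U iS) (hinacc : Cardinal.IsInaccessible #U) (hcard : L.card < #U)
    (n : ℕ) (D : Set (Fin n → U)) (A : Set U) (hA : #A < #U)
    (hvc : FiniteVC (oSet L U A D))
    (a : ℕ → Fin n → U) (ha : IndiscOver L U A a) :
    ∃ N : ℕ, ∀ i ≥ N, ∀ j ≥ N, (a i ∈ D ↔ a j ∈ D) := by
  classical
  by_contra hcon
  push_neg at hcon
  obtain ⟨N, hN⟩ := hvc
  -- pick indices with prescribed membership, arbitrarily far out
  have hpick : ∀ (tf : Bool) (M : ℕ), ∃ i, M ≤ i ∧ ((a i ∈ D) ↔ tf = true) := by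
    intro tf M
    obtain ⟨i, hi, j, hj, hij⟩ := hcon M
    by_cases hD1 : a i ∈ D
    · cases tf with
      | false =>
        have h2 : a j ∉ D := by tauto
        exact ⟨j, hj, by simpa using h2⟩
      | true => exact ⟨i, hi, by simpa using hD1⟩
    · cases tf with
      | false => exact ⟨i, hi, by simpa using hD1⟩
      | true =>
        have h2 : a j ∈ D := by tauto
        exact ⟨j, hj, by simpa using h2⟩
  have halt : ∃ i j : ℕ, i < j ∧ ¬(a i ∈ D ↔ a j ∈ D) := by
    obtain ⟨i, hi, j, hj, hij⟩ := hcon 0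
    have hij' : ¬(a i ∈ D ↔ a j ∈ D) := by tauto
    rcases lt_trichotomy i j with h | h | h
    · exact ⟨i, j, h, hij'⟩
    · subst h; tauto
    · exact ⟨j, i, h, fun hh => hij' hh.symm⟩
  have sm2 : ∀ {x y : ℕ}, x < y → StrictMono (![x, y] : Fin 2 → ℕ) := by
    intro x y h p q hpq
    fin_cases p <;> fin_cases q <;> simp_all [Fin.lt_def]
  -- the equality formula
  set eqF : (L[[↥A]]).Formula (Fin 2 × Fin n) :=
    BoundedFormula.iInf (fun i : Fin n =>
      Term.equal (Term.var (((0 : Fin 2), i) : Fin 2 × Fin n))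
        (Term.var (((1 : Fin 2), i) : Fin 2 × Fin n))) with heqFdef
  have heqF : ∀ v : Fin 2 × Fin n → U,
      FRealize U (addConsts U iS A) eqF v ↔ ∀ i : Fin n, v (0, i) = v (1, i) := by
    intro v
    have h0 : FRealize U (addConsts U iS A) eqF v ↔
        ∀ ψ ∈ (Finset.univ : Finset (Fin n)),
          Formula.Realize (M := U)
            (Term.equal (Term.var (((0 : Fin 2), ψ) : Fin 2 × Fin n))
              (Term.var (((1 : Fin 2), ψ) : Fin 2 × Fin n))) v :=
      BoundedFormula.realize_iInf.trans
        (by simp only [Finset.mem_univ, true_imp_iff]; exact Iff.rfl)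
    rw [h0]
    simp [Term.realize]
  have hdist : ∀ s t : ℕ, s < t → a s ≠ a t := by
    intro s t hst hEq
    obtain ⟨i, j, hlt, hne⟩ := halt
    apply hne
    have hiff := ha 2 ![s, t] ![i, j] (sm2 hst) (sm2 hlt) eqF
    rw [heqF, heqF] at hiff
    have h2 : ∀ i' : Fin n, a i i' = a j i' := by
      apply hiff.mp
      intro i'
      show a (![s, t] 0) i' = a (![s, t] 1) i'
      rw [show (![s, t] : Fin 2 → ℕ) 0 = s by simp,
        show (![s, t] : Fin 2 → ℕ) 1 = t by simp, hEq]
    rw [show a i = a j from funext h2]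
  -- the finite set to be shattered
  have hinj : Set.InjOn (fun t => a t) ↑(Finset.range N) := by
    intro s hs t ht h
    by_contra hne
    rcases lt_or_gt_of_ne hne with hlt | hlt
    · exact hdist s t hlt h
    · exact hdist t s hlt h.symm
  set B : Finset (Fin n → U) := (Finset.range N).image (fun t => a t) with hBdef
  have hcardB : B.card = N := by
    rw [hBdef, Finset.card_image_of_injOn hinj, Finset.card_range]
  apply hN B hcardB
  intro H hH
  set ε : ℕ → Bool := fun t => decide (a t ∈ H) with hεdef
  let jrec : ℕ → ℕ := fun t =>
    Nat.rec ((hpick (ε 0) 0).choose)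
      (fun s prev => (hpick (ε (s + 1)) (prev + 1)).choose) t
  have hjmem : ∀ t, ((a (jrec t) ∈ D) ↔ ε t = true) := by
    intro t
    cases t with
    | zero => exact (hpick (ε 0) 0).choose_spec.2
    | succ s => exact (hpick (ε (s + 1)) ((jrec s) + 1)).choose_spec.2
  have hjmono : StrictMono jrec := by
    apply strictMono_nat_of_lt_succ
    intro s
    exact lt_of_lt_of_le (Nat.lt_succ_self _)
      (hpick (ε (s + 1)) ((jrec s) + 1)).choose_spec.1
  have htp : ∀ φ : (L[[↥A]]).Formula (Fin N × Fin n),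
      FRealize U (addConsts U iS A) φ (fun q => a (jrec q.1) q.2) ↔
      FRealize U (addConsts U iS A) φ (fun q => a (q.1 : ℕ) q.2) := by
    intro φ
    exact ha N (fun t => jrec (t : ℕ)) (fun t => (t : ℕ))
      (fun p q h => hjmono h) (fun p q h => h) φ
  obtain ⟨f, hfix, hf⟩ := strong_homog hsat (le_of_lt hinacc.1) hA
    (fun q : Fin N × Fin n => a (jrec q.1) q.2) (fun q => a (q.1 : ℕ) q.2) htp
  refine ⟨imgSet L U f D, ⟨f, hfix, rfl⟩, ?_⟩
  have hfa : ∀ t : ℕ, t < N → (⇑f ∘ (a (jrec t))) = a t := by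
    intro t ht; funext i; exact hf (⟨t, ht⟩, i)
  ext x
  constructor
  · rintro ⟨⟨d, hd, hfd⟩, hxB⟩
    obtain ⟨t, htN, hta⟩ := Finset.mem_image.mp hxB
    have htN' := Finset.mem_range.mp htN
    have hda : d = a (jrec t) := by
      have hfd' : ⇑f ∘ d = x := hfd
      have h1 : ⇑f ∘ d = ⇑f ∘ (a (jrec t)) := by
        rw [hfd', hfa t htN', hta]
      funext i
      exact f.injective (congrFun h1 i)
    rw [hda] at hd
    have : ε t = true := (hjmem t).mp hd
    have : a t ∈ H := of_decide_eq_true this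
    rwa [hta] at this
  · intro hxH
    have hxB : x ∈ (B : Set (Fin n → U)) := hH hxH
    obtain ⟨t, htN, hta⟩ := Finset.mem_image.mp hxB
    have htN' := Finset.mem_range.mp htN
    refine ⟨⟨a (jrec t), ?_, ?_⟩, hxB⟩
    · apply (hjmem t).mpr
      apply decide_eq_true
      rwa [hta]
    · show ⇑f ∘ (a (jrec t)) = x
      rw [hfa t htN', hta]


end Paper
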